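/- Let (G, Ǧ₂, ε) be a right multiplier bicomonad on a monoidal category C, and let (V, v̌) and (W, w̌) be G-comodules. Then V ⊗ W is a G-comodule via the natural transformation x̌_Y := (1_V ⊗ w̌_Y) ≫ v̌_{W ⊗ Y} : V ⊗ W ⊗ GY ⟶ G(V ⊗ W ⊗ Y); that is, x̌ satisfies (1_{V⊗W} ⊗ Ǧ₂^{Y,Z}) ≫ x̌_{GY⊗Z} ≫ G(x̌_Y ⊗ 1_Z) = (x̌_Y ⊗ 1_{GZ}) ≫ Ǧ₂^{V⊗W⊗Y, Z} and x̌_Y ≫ ε_{V⊗W⊗Y} = 1_{V⊗W} ⊗ ε_Y. -/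

import Mathlib

open CategoryTheory Category MonoidalCategory

universe v u

variable {C : Type u} [Category.{v} C] [MonoidalCategory C]

/-- The monoidal product of two comodules over a right multiplier bicomonad
`(G, Ǧ₂, ε)` is again a comodule, via `x̌_Y := (1_V ⊗ w̌_Y) ≫ v̌_{W ⊗ Y}`. -/
theorem comodule_tensor_of_rightMultiplierBicomonad
    (G : C ⥤ C)
    (G₂ : ∀ X Y : C, G.obj X ⊗ G.obj Y ⟶ G.obj (G.obj X ⊗ Y))
    (ε : ∀ X : C, G.obj X ⟶ X)
    -- naturality of `Ǧ₂` and `ε`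
    (hG₂nat : ∀ {X X' Y Y' : C} (f : X ⟶ X') (g : Y ⟶ Y'),
      (G.map f ⊗ₘ G.map g) ≫ G₂ X' Y' = G₂ X Y ≫ G.map (G.map f ⊗ₘ g))
    (hεnat : ∀ {X Y : C} (f : X ⟶ Y), G.map f ≫ ε Y = ε X ≫ f)
    -- the right multiplier bicomonad axioms
    (hGassoc : ∀ X Y Z : C,
      (α_ (G.obj X) (G.obj Y) (G.obj Z)).hom ≫ (G.obj X ◁ G₂ Y Z) ≫
          G₂ X (G.obj Y ⊗ Z) ≫
          G.map ((α_ (G.obj X) (G.obj Y) Z).inv ≫ (G₂ X Y ▷ Z)) =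
        (G₂ X Y ▷ G.obj Z) ≫ G₂ (G.obj X ⊗ Y) Z)
    (hGcou : ∀ X Y : C, G₂ X Y ≫ ε (G.obj X ⊗ Y) = G.obj X ◁ ε Y)
    -- a comodule `(V, v̌)`
    (V : C) (v : ∀ Y : C, V ⊗ G.obj Y ⟶ G.obj (V ⊗ Y))
    (hvnat : ∀ {Y Y' : C} (g : Y ⟶ Y'),
      (V ◁ G.map g) ≫ v Y' = v Y ≫ G.map (V ◁ g))
    (hv : ∀ Y Z : C,
      (α_ V (G.obj Y) (G.obj Z)).hom ≫ (V ◁ G₂ Y Z) ≫ v (G.obj Y ⊗ Z) ≫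
          G.map ((α_ V (G.obj Y) Z).inv ≫ (v Y ▷ Z)) =
        (v Y ▷ G.obj Z) ≫ G₂ (V ⊗ Y) Z)
    (hve : ∀ Y : C, v Y ≫ ε (V ⊗ Y) = V ◁ ε Y)
    -- a comodule `(W, w̌)`
    (W : C) (w : ∀ Y : C, W ⊗ G.obj Y ⟶ G.obj (W ⊗ Y))
    (hwnat : ∀ {Y Y' : C} (g : Y ⟶ Y'),
      (W ◁ G.map g) ≫ w Y' = w Y ≫ G.map (W ◁ g))
    (hw : ∀ Y Z : C,
      (α_ W (G.obj Y) (G.obj Z)).hom ≫ (W ◁ G₂ Y Z) ≫ w (G.obj Y ⊗ Z) ≫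
          G.map ((α_ W (G.obj Y) Z).inv ≫ (w Y ▷ Z)) =
        (w Y ▷ G.obj Z) ≫ G₂ (W ⊗ Y) Z)
    (hwe : ∀ Y : C, w Y ≫ ε (W ⊗ Y) = W ◁ ε Y)
    -- the candidate comodule structure on `V ⊗ W`
    (x : ∀ Y : C, (V ⊗ W) ⊗ G.obj Y ⟶ G.obj ((V ⊗ W) ⊗ Y))
    (hx : ∀ Y : C, x Y =
      (α_ V W (G.obj Y)).hom ≫ (V ◁ w Y) ≫ v (W ⊗ Y) ≫ G.map (α_ V W Y).inv) :
    (∀ Y Z : C,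
      (α_ (V ⊗ W) (G.obj Y) (G.obj Z)).hom ≫ ((V ⊗ W) ◁ G₂ Y Z) ≫
          x (G.obj Y ⊗ Z) ≫
          G.map ((α_ (V ⊗ W) (G.obj Y) Z).inv ≫ (x Y ▷ Z)) =
        (x Y ▷ G.obj Z) ≫ G₂ ((V ⊗ W) ⊗ Y) Z) ∧
    (∀ Y : C, x Y ≫ ε ((V ⊗ W) ⊗ Y) = (V ⊗ W) ◁ ε Y) := by
  constructor
  · intro Y Z
    have hw2 : (α_ W (G.obj Y) (G.obj Z)).hom ≫ (W ◁ G₂ Y Z) ≫ w (G.obj Y ⊗ Z) ≫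
        G.map (α_ W (G.obj Y) Z).inv ≫ G.map (w Y ▷ Z) =
        (w Y ▷ G.obj Z) ≫ G₂ (W ⊗ Y) Z := by
      simpa [Functor.map_comp] using hw Y Z
    have hv2 : (α_ V (G.obj (W ⊗ Y)) (G.obj Z)).hom ≫ (V ◁ G₂ (W ⊗ Y) Z) ≫
        v (G.obj (W ⊗ Y) ⊗ Z) ≫ G.map (α_ V (G.obj (W ⊗ Y)) Z).inv ≫
        G.map (v (W ⊗ Y) ▷ Z) =
        (v (W ⊗ Y) ▷ G.obj Z) ≫ G₂ (V ⊗ (W ⊗ Y)) Z := by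
      simpa [Functor.map_comp] using hv (W ⊗ Y) Z
    have hn : G₂ (V ⊗ (W ⊗ Y)) Z ≫ G.map (G.map (α_ V W Y).inv ▷ Z) =
        (G.map (α_ V W Y).inv ▷ G.obj Z) ≫ G₂ ((V ⊗ W) ⊗ Y) Z := by
      simpa using (hG₂nat (α_ V W Y).inv (𝟙 Z)).symm
    have coh : (α_ V W (G.obj Y ⊗ Z)).inv ≫ (α_ (V ⊗ W) (G.obj Y) Z).inv ≫
        ((α_ V W (G.obj Y)).hom ▷ Z) =
        (V ◁ (α_ W (G.obj Y) Z).inv) ≫ (α_ V (W ⊗ G.obj Y) Z).inv := by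
      coherence
    simp only [hx, comp_whiskerRight, Functor.map_comp, Category.assoc]
    slice_lhs 2 3 => rw [associator_naturality_right]
    slice_lhs 1 2 => rw [← pentagon]
    slice_lhs 7 9 => rw [← Functor.map_comp, ← Functor.map_comp, coh, Functor.map_comp]
    slice_lhs 8 9 => rw [← Functor.map_comp, ← associator_inv_naturality_middle,
      Functor.map_comp]
    slice_lhs 6 7 => rw [← hvnat]
    slice_lhs 7 8 => rw [← hvnat]
    slice_lhs 3 7 => rw [← MonoidalCategory.whiskerLeft_comp, ← MonoidalCategory.whiskerLeft_comp,
      ← MonoidalCategory.whiskerLeft_comp, ← MonoidalCategory.whiskerLeft_comp, hw2,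
      MonoidalCategory.whiskerLeft_comp]
    slice_lhs 2 3 => rw [← associator_naturality_middle]
    slice_lhs 3 7 => rw [hv2]
    slice_lhs 4 5 => rw [hn]
  · intro Y
    rw [hx]
    slice_lhs 4 5 => rw [hεnat]
    slice_lhs 3 4 => rw [hve]
    slice_lhs 2 3 => rw [← MonoidalCategory.whiskerLeft_comp, hwe Y]
    slice_lhs 2 3 => rw [associator_inv_naturality_right]
    simp
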